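/- In the cluster graph for n-permutations, for each cluster Y there exists a unique cluster X such that there are exactly two edges from X to Y. Equivalently: for each permutation τ of [n-1], there is a unique permutation σ of [n-1] such that exactly two permutations x of [n] satisfy reduce(x_1⋯x_{n-1}) = σ and reduce(x_2⋯x_n) = τ. -/

import Mathlib

/-- `reduce w` replaces each copy of the i-th smallest value of `w` by `i`. -/
def reduce {m : ℕ} (w : Fin m → ℕ) : Fin m → ℕ :=
  fun i => ((Finset.univ.image w).filter (fun v => v ≤ w i)).card

/-- The first `n-1` letters of a word of length `n`. -/
def firstw {n : ℕ} (w : Fin n → ℕ) : Fin (n - 1) → ℕ :=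
  fun i => w (Fin.castLE (Nat.sub_le n 1) i)

/-- The last `n-1` letters of a word of length `n`. -/
def lastw {n : ℕ} (w : Fin n → ℕ) : Fin (n - 1) → ℕ :=
  fun i => w ⟨i.val + 1, by have := i.isLt; omega⟩

/-- The word (with letters in `{1,…,n}`) associated with a permutation of `[n]`. -/
def permWord {n : ℕ} (x : Equiv.Perm (Fin n)) : Fin n → ℕ := fun i => (x i : ℕ) + 1

/-- The word of a permutation of `[n-1]` indexing a cluster. -/
def clusterWord {n : ℕ} (σ : Equiv.Perm (Fin (n - 1))) : Fin (n - 1) → ℕ :=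
  fun i => (σ i : ℕ) + 1

/-- `x` is an edge of the cluster graph from `σ` to `τ`:
`reduce(x₁⋯x_{n-1}) = σ` and `reduce(x₂⋯x_n) = τ`. -/
def isEdge {n : ℕ} (x : Equiv.Perm (Fin n)) (σ τ : Equiv.Perm (Fin (n - 1))) : Prop :=
  reduce (firstw (permWord x)) = clusterWord σ ∧ reduce (lastw (permWord x)) = clusterWord τ

section aux
open Finset
lemma reduce_of_inj {k : ℕ} {w : Fin k → ℕ} (hw : Function.Injective w) (i : Fin k) :
    reduce w i = (univ.filter (fun j => w j ≤ w i)).card := by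
  unfold reduce
  rw [Finset.filter_image]
  rw [Finset.card_image_of_injective _ hw]

lemma rank_le_rank {k : ℕ} {w : Fin k → ℕ} (hw : Function.Injective w) (i j : Fin k) :
    w i ≤ w j ↔ reduce w i ≤ reduce w j := by
  rw [reduce_of_inj hw, reduce_of_inj hw]
  constructor
  · intro h
    exact Finset.card_le_card (by intro a ha; simp at ha ⊢; omega)
  · intro h
    by_contra hc
    push_neg at hc
    have hss : univ.filter (fun a => w a ≤ w j) ⊂ univ.filter (fun a => w a ≤ w i) := by
      apply Finset.ssubset_iff_of_subset (by intro a ha; simp at ha ⊢; omega) |>.mpr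
      exact ⟨i, by simp, by simp; omega⟩
    have := Finset.card_lt_card hss
    omega

lemma reduce_eq_reduce_iff {k : ℕ} {w w' : Fin k → ℕ} (hw : Function.Injective w)
    (hw' : Function.Injective w') :
    reduce w = reduce w' ↔ ∀ i j, (w i ≤ w j ↔ w' i ≤ w' j) := by
  constructor
  · intro h i j
    rw [rank_le_rank hw, rank_le_rank hw', h]
  · intro h
    funext i
    rw [reduce_of_inj hw, reduce_of_inj hw']
    congr 1
    ext j
    simp [h]

lemma pattern_unique {k : ℕ} (σ ρ : Equiv.Perm (Fin k))
    (h : ∀ i j, ((σ i : ℕ) ≤ σ j ↔ (ρ i : ℕ) ≤ ρ j)) : σ = ρ := by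
  have hf : ∀ a b : Fin k, (σ (ρ.symm a) ≤ σ (ρ.symm b) ↔ a ≤ b) := by
    intro a b
    rw [Fin.le_def, h, Fin.le_def.symm]
    simp
  have hsm : StrictMono (fun a => σ (ρ.symm a)) := by
    intro a b hab
    have h1 := (hf a b).mpr hab.le
    have h2 := hf b a
    rcases lt_or_eq_of_le h1 with h | h
    · exact h
    · exfalso
      have : ρ.symm a = ρ.symm b := σ.injective (Fin.le_antisymm h1 (le_of_eq h.symm))
      have := ρ.symm.injective this
      exact absurd this hab.ne
  have hrange : Set.range (fun a => σ (ρ.symm a)) = Set.range (id : Fin k → Fin k) := by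
    rw [Set.range_id]
    exact Set.range_eq_univ.mpr (σ.surjective.comp ρ.symm.surjective)
  have := (hsm.range_inj strictMono_id).mp hrange
  ext a
  have h2 := congrFun this (ρ a)
  simp at h2
  exact congrArg Fin.val h2

lemma reduce_perm_coe {k : ℕ} (σ : Equiv.Perm (Fin k)) :
    reduce (fun i => (σ i : ℕ)) = fun i => (σ i : ℕ) + 1 := by
  have hinj : Function.Injective (fun i => (σ i : ℕ)) := by
    intro a b hab
    exact σ.injective (Fin.val_injective hab)
  funext i
  rw [reduce_of_inj hinj]
  have : (univ.filter (fun j => ((σ j : ℕ)) ≤ (σ i : ℕ))).card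
      = (univ.filter (fun v : Fin k => v ≤ σ i)).card := by
    apply Finset.card_bij' (fun j _ => σ j) (fun v _ => σ.symm v) <;>
      intro a ha <;> simp_all
  rw [this]
  have : univ.filter (fun v : Fin k => v ≤ σ i) = Finset.Iic (σ i) := by ext v; simp
  rw [this, Fin.card_Iic]

lemma reduce_eq_cluster_iff {k : ℕ} {w : Fin k → ℕ} (hw : Function.Injective w)
    (σ : Equiv.Perm (Fin k)) :
    reduce w = (fun i => (σ i : ℕ) + 1) ↔ ∀ i j, (w i ≤ w j ↔ (σ i : ℕ) ≤ (σ j : ℕ)) := by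
  have hinj : Function.Injective (fun i => (σ i : ℕ)) := by
    intro a b hab
    exact σ.injective (Fin.val_injective hab)
  rw [← reduce_perm_coe σ]
  exact reduce_eq_reduce_iff hw hinj

lemma exists_pattern {k : ℕ} {w : Fin k → ℕ} (hw : Function.Injective w) :
    ∃ σ : Equiv.Perm (Fin k), reduce w = (fun i => (σ i : ℕ) + 1) := by
  rcases Nat.eq_zero_or_pos k with rfl | hk
  · exact ⟨1, funext fun i => i.elim0⟩
  have hb : ∀ i : Fin k, (univ.filter (fun j => w j < w i)).card < k := by
    intro i
    have : univ.filter (fun j => w j < w i) ⊆ univ.erase i := by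
      intro a ha
      simp at ha ⊢
      intro h; subst h; omega
    calc (univ.filter (fun j => w j < w i)).card ≤ (univ.erase i).card := Finset.card_le_card this
      _ < univ.card := Finset.card_erase_lt_of_mem (mem_univ i)
      _ = k := by simp
  set g : Fin k → Fin k := fun i => ⟨(univ.filter (fun j => w j < w i)).card, hb i⟩ with hg
  have hginj : Function.Injective g := by
    intro a b hab
    by_contra hne
    have hwne : w a ≠ w b := fun h => hne (hw h)
    have key : ∀ a b : Fin k, w a < w b → (g a : ℕ) < (g b : ℕ) := by
      intro a b hlt
      show (univ.filter (fun j => w j < w a)).card < (univ.filter (fun j => w j < w b)).card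
      apply Finset.card_lt_card
      apply Finset.ssubset_iff_of_subset (by intro x hx; simp at hx ⊢; omega) |>.mpr
      exact ⟨a, by simp only [mem_filter, mem_univ, true_and]; omega,
        by simp only [mem_filter, mem_univ, true_and]; omega⟩
    rcases lt_or_gt_of_ne hwne with h | h
    · have := key _ _ h; rw [hab] at this; omega
    · have := key _ _ h; rw [hab] at this; omega
  refine ⟨Equiv.ofBijective g (Finite.injective_iff_bijective.mp hginj), ?_⟩
  funext i
  rw [reduce_of_inj hw]
  have : univ.filter (fun j => w j ≤ w i) = insert i (univ.filter (fun j => w j < w i)) := by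
    ext a
    simp
    constructor
    · intro h
      rcases eq_or_ne a i with rfl | hne
      · exact Or.inl rfl
      · right; rcases lt_or_eq_of_le h with h | h
        · exact h
        · exact absurd (hw h) hne
    · rintro (rfl | h) <;> omega
  rw [this, Finset.card_insert_of_notMem (by simp)]
  rfl

section main
variable {m : ℕ} (τ : Equiv.Perm (Fin (m+1))) (c : Fin (m+2))

lemma succAbove_val (v : Fin (m+1)) :
    (c.succAbove v : ℕ) = if (v:ℕ) < c then (v:ℕ) else (v:ℕ)+1 := by
  rw [Fin.succAbove]
  split_ifs with h1 h2 h2 <;> simp_all [Fin.lt_def]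

def xfun : Fin (m+2) → Fin (m+2) := Fin.cons c (fun i => c.succAbove (τ i))

lemma xfun_zero : xfun τ c 0 = c := rfl

lemma xfun_succ (i : Fin (m+1)) : xfun τ c i.succ = c.succAbove (τ i) := by
  simp [xfun]

lemma xfun_inj : Function.Injective (xfun τ c) := by
  intro a b h
  cases a using Fin.cases with
  | zero => cases b using Fin.cases with
    | zero => rfl
    | succ j => rw [xfun_zero, xfun_succ] at h; exact absurd h.symm (Fin.succAbove_ne c (τ j))
  | succ i => cases b using Fin.cases with
    | zero => rw [xfun_zero, xfun_succ] at h; exact absurd h (Fin.succAbove_ne c (τ i))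
    | succ j =>
        rw [xfun_succ, xfun_succ] at h
        rw [τ.injective (Fin.succAbove_right_injective h)]

noncomputable def xperm : Equiv.Perm (Fin (m+2)) :=
  Equiv.ofBijective (xfun τ c) (Finite.injective_iff_bijective.mp (xfun_inj τ c))

lemma xperm_apply (i : Fin (m+2)) : xperm τ c i = xfun τ c i := rfl

/-- the clean version of `lastw (permWord x)` -/
def lw (x : Equiv.Perm (Fin (m+2))) : Fin (m+1) → ℕ := fun i => (x i.succ : ℕ) + 1

/-- the clean version of `firstw (permWord x)` -/
def fw (x : Equiv.Perm (Fin (m+2))) : Fin (m+1) → ℕ := fun i => (x i.castSucc : ℕ) + 1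

lemma lw_inj (x : Equiv.Perm (Fin (m+2))) : Function.Injective (lw x) := by
  intro a b h
  unfold lw at h
  have := x.injective (Fin.val_injective (by omega : (x a.succ : ℕ) = x b.succ))
  exact Fin.succ_injective _ this

lemma fw_inj (x : Equiv.Perm (Fin (m+2))) : Function.Injective (fw x) := by
  intro a b h
  unfold fw at h
  have := x.injective (Fin.val_injective (by omega : (x a.castSucc : ℕ) = x b.castSucc))
  exact Fin.castSucc_injective _ this

/-- Characterisation of the last-word condition. -/
lemma lastcond_iff (x : Equiv.Perm (Fin (m+2))) :
    reduce (lw x) = (fun i => (τ i : ℕ) + 1) ↔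
      ∀ i : Fin (m+1), x i.succ = (x 0).succAbove (τ i) := by
  rw [reduce_eq_cluster_iff (lw_inj x) τ]
  constructor
  · intro h i
    have hne : ∀ i : Fin (m+1), x i.succ ≠ x 0 :=
      fun i hi => (Fin.succ_ne_zero i) (x.injective hi)
    have hex : ∀ i : Fin (m+1), ∃ j, (x 0).succAbove j = x i.succ :=
      fun i => Fin.exists_succAbove_eq (hne i)
    choose g hgspec using hex
    have hginj : Function.Injective g := by
      intro a b hab
      have : x a.succ = x b.succ := by rw [← hgspec, ← hgspec, hab]
      exact Fin.succ_injective _ (x.injective this)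
    let ρ : Equiv.Perm (Fin (m+1)) :=
      Equiv.ofBijective g (Finite.injective_iff_bijective.mp hginj)
    have hρ : ρ = τ := by
      apply pattern_unique
      intro i j
      have h1 : ((ρ i : Fin (m+1)) ≤ ρ j) ↔ ((x 0).succAbove (ρ i) ≤ (x 0).succAbove (ρ j)) :=
        ((Fin.strictMono_succAbove (x 0)).le_iff_le).symm
      have h2 : (x 0).succAbove (ρ i) = x i.succ := hgspec i
      have h3 : (x 0).succAbove (ρ j) = x j.succ := hgspec j
      have h4 := h i j
      unfold lw at h4
      rw [Fin.le_def] at h1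
      constructor
      · intro hle
        have := h1.mp hle
        rw [h2, h3] at this
        rw [Fin.le_def] at this
        omega
      · intro hle
        apply h1.mpr
        rw [h2, h3, Fin.le_def]
        omega
    rw [← hgspec i]
    show (x 0).succAbove (ρ i) = _
    rw [hρ]
  · intro h i j
    unfold lw
    rw [h i, h j]
    have := (Fin.strictMono_succAbove (x 0)).le_iff_le (a := τ i) (b := τ j)
    rw [Fin.le_def, Fin.le_def] at this
    omega

end main

section main2
variable {m : ℕ} (τ : Equiv.Perm (Fin (m+1))) (c c' : Fin (m+2))

lemma le_succAbove_iff (v : Fin (m+1)) : (c:ℕ) ≤ (c.succAbove v : ℕ) ↔ (c:ℕ) ≤ (v:ℕ) := by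
  rw [succAbove_val]; split_ifs <;> omega

lemma succAbove_le_iff (v : Fin (m+1)) : (c.succAbove v : ℕ) ≤ (c:ℕ) ↔ ¬((c:ℕ) ≤ (v:ℕ)) := by
  rw [succAbove_val]; split_ifs <;> omega

lemma sa_le_sa_iff (u v : Fin (m+1)) :
    (c.succAbove u : ℕ) ≤ (c.succAbove v : ℕ) ↔ (u:ℕ) ≤ (v:ℕ) := by
  rw [succAbove_val, succAbove_val]; split_ifs <;> omega

noncomputable def sigmaPat : Equiv.Perm (Fin (m+1)) :=
  Classical.choose (exists_pattern (fw_inj (xperm τ c)))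

lemma sigmaPat_spec : reduce (fw (xperm τ c)) = (fun i => ((sigmaPat τ c) i : ℕ) + 1) :=
  Classical.choose_spec (exists_pattern (fw_inj (xperm τ c)))

lemma fw_xperm_zero : fw (xperm τ c) 0 = (c : ℕ) + 1 := rfl

lemma fw_xperm_succ (j : Fin m) :
    fw (xperm τ c) j.succ = (c.succAbove (τ j.castSucc) : ℕ) + 1 := by
  show (xperm τ c (j.succ).castSucc : ℕ) + 1 = _
  rw [← Fin.succ_castSucc, xperm_apply, xfun_succ]

lemma cluster_inj {k : ℕ} (σ ρ : Equiv.Perm (Fin k))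
    (h : (fun i => ((σ i : ℕ) + 1)) = fun i => ((ρ i : ℕ) + 1)) : σ = ρ := by
  ext i
  have := congrFun h i
  simp at this
  exact this

lemma sigmaPat_eq_iff :
    sigmaPat τ c = sigmaPat τ c' ↔
      ∀ j : Fin m, ((c:ℕ) ≤ (τ j.castSucc : ℕ) ↔ (c':ℕ) ≤ (τ j.castSucc : ℕ)) := by
  have s1 := sigmaPat_spec τ c
  have s2 := sigmaPat_spec τ c'
  constructor
  · intro h j
    have hred : reduce (fw (xperm τ c)) = reduce (fw (xperm τ c')) := by
      rw [s1, s2, h]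
    have := (reduce_eq_reduce_iff (fw_inj _) (fw_inj _)).mp hred 0 j.succ
    rw [fw_xperm_zero, fw_xperm_zero, fw_xperm_succ, fw_xperm_succ] at this
    have l1 := le_succAbove_iff c (τ j.castSucc)
    have l2 := le_succAbove_iff c' (τ j.castSucc)
    omega
  · intro h
    have hred : reduce (fw (xperm τ c)) = reduce (fw (xperm τ c')) := by
      rw [reduce_eq_reduce_iff (fw_inj _) (fw_inj _)]
      intro i j
      cases i using Fin.cases with
      | zero => cases j using Fin.cases with
        | zero => simp
        | succ j =>
            rw [fw_xperm_zero, fw_xperm_zero, fw_xperm_succ, fw_xperm_succ]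
            have l1 := le_succAbove_iff c (τ j.castSucc)
            have l2 := le_succAbove_iff c' (τ j.castSucc)
            have := h j
            omega
      | succ i => cases j using Fin.cases with
        | zero =>
            rw [fw_xperm_zero, fw_xperm_zero, fw_xperm_succ, fw_xperm_succ]
            have l1 := succAbove_le_iff c (τ i.castSucc)
            have l2 := succAbove_le_iff c' (τ i.castSucc)
            have := h i
            omega
        | succ j =>
            rw [fw_xperm_succ, fw_xperm_succ, fw_xperm_succ, fw_xperm_succ]
            have l1 := sa_le_sa_iff c (τ i.castSucc) (τ j.castSucc)
            have l2 := sa_le_sa_iff c' (τ i.castSucc) (τ j.castSucc)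
            omega
    apply cluster_inj
    rw [← s1, ← s2, hred]

/-- the combinatorial relation `P`. -/
def Prel (t : Fin (m+1)) (c c' : Fin (m+2)) : Prop :=
  c = c' ∨ ((c:ℕ) = (t:ℕ) ∧ (c':ℕ) = (t:ℕ) + 1) ∨ ((c':ℕ) = (t:ℕ) ∧ (c:ℕ) = (t:ℕ) + 1)

lemma condA :
    (∀ j : Fin m, ((c:ℕ) ≤ (τ j.castSucc : ℕ) ↔ (c':ℕ) ≤ (τ j.castSucc : ℕ))) ↔
      (∀ v : Fin (m+1), v ≠ τ (Fin.last m) → ((c:ℕ) ≤ (v:ℕ) ↔ (c':ℕ) ≤ (v:ℕ))) := by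
  constructor
  · intro h v hv
    have : τ.symm v ≠ Fin.last m := by
      intro he
      apply hv
      rw [← τ.apply_symm_apply v, he]
    obtain ⟨j, hj⟩ := Fin.exists_castSucc_eq.mpr this
    have := h j
    rw [hj] at this
    simpa using this
  · intro h j
    apply h
    intro he
    have := τ.injective he
    exact absurd this (Fin.castSucc_lt_last j).ne

lemma condB (t : Fin (m+1)) :
    (∀ v : Fin (m+1), v ≠ t → ((c:ℕ) ≤ (v:ℕ) ↔ (c':ℕ) ≤ (v:ℕ))) ↔ Prel t c c' := by
  constructor
  · intro h
    have claim : ∀ a b : Fin (m+2), (a:ℕ) < (b:ℕ) →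
        (∀ v : Fin (m+1), v ≠ t → ((a:ℕ) ≤ (v:ℕ) ↔ (b:ℕ) ≤ (v:ℕ))) →
        (a:ℕ) = (t:ℕ) ∧ (b:ℕ) = (t:ℕ) + 1 := by
      intro a b hab hcond
      have hbm : (b:ℕ) ≤ m + 1 := by omega
      have ham : (a:ℕ) ≤ m := by omega
      have hv : (⟨(a:ℕ), by omega⟩ : Fin (m+1)) = t := by
        by_contra hne
        have := hcond _ hne
        simp only [] at this
        omega
      have hta : (t:ℕ) = (a:ℕ) := by rw [← hv]
      refine ⟨hta.symm, ?_⟩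
      by_contra hb
      have hb2 : (a:ℕ) + 1 < (b:ℕ) := by omega
      have hv' : (⟨(a:ℕ) + 1, by omega⟩ : Fin (m+1)) ≠ t := by
        intro he
        have : (a:ℕ) + 1 = (t:ℕ) := by rw [← he]
        omega
      have := hcond _ hv'
      simp only [] at this
      omega
    rcases Nat.lt_trichotomy (c:ℕ) (c':ℕ) with hlt | heq | hgt
    · exact Or.inr (Or.inl (claim c c' hlt h))
    · exact Or.inl (Fin.val_injective heq)
    · exact Or.inr (Or.inr (claim c' c hgt (fun v hv => (h v hv).symm)))
  · intro h v hv
    have hvt : (v:ℕ) ≠ (t:ℕ) := fun he => hv (Fin.val_injective he)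
    rcases h with rfl | ⟨h1, h2⟩ | ⟨h1, h2⟩ <;> omega

lemma sigmaPat_eq_iff' :
    sigmaPat τ c = sigmaPat τ c' ↔ Prel (τ (Fin.last m)) c c' := by
  rw [sigmaPat_eq_iff, condA, condB]

end main2

section main3
variable {m : ℕ} (τ : Equiv.Perm (Fin (m+1)))

lemma xperm_eq_of (x : Equiv.Perm (Fin (m+2)))
    (hl : reduce (lw x) = (fun i => (τ i : ℕ) + 1)) : x = xperm τ (x 0) := by
  have h := (lastcond_iff τ x).mp hl
  ext u
  refine congrArg Fin.val ?_
  cases u using Fin.cases with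
  | zero => rfl
  | succ i => rw [h i, xperm_apply, xfun_succ]

lemma lastcond_xperm (c : Fin (m+2)) :
    reduce (lw (xperm τ c)) = (fun i => (τ i : ℕ) + 1) := by
  rw [lastcond_iff]
  intro i
  rw [xperm_apply, xfun_succ, xperm_apply, xfun_zero]

noncomputable def edgeEquiv (σ : Equiv.Perm (Fin (m+1))) :
    {x : Equiv.Perm (Fin (m+2)) //
      reduce (fw x) = (fun i => (σ i : ℕ) + 1) ∧ reduce (lw x) = (fun i => (τ i : ℕ) + 1)} ≃
    {c : Fin (m+2) // sigmaPat τ c = σ} where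
  toFun := fun ⟨x, hf, hl⟩ => ⟨x 0, by
    have hx := xperm_eq_of τ x hl
    apply cluster_inj
    rw [← sigmaPat_spec τ (x 0), ← hf]
    rw [← hx]⟩
  invFun := fun ⟨c, hc⟩ => ⟨xperm τ c, by
    constructor
    · rw [sigmaPat_spec τ c, hc]
    · exact lastcond_xperm τ c⟩
  left_inv := by
    rintro ⟨x, hf, hl⟩
    exact Subtype.ext (xperm_eq_of τ x hl).symm
  right_inv := by
    rintro ⟨c, hc⟩
    rfl

lemma main_clean :
    ∃! σ : Equiv.Perm (Fin (m+1)),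
      Nat.card {x : Equiv.Perm (Fin (m+2)) //
        reduce (fw x) = (fun i => (σ i : ℕ) + 1) ∧
        reduce (lw x) = (fun i => (τ i : ℕ) + 1)} = 2 := by
  set t := τ (Fin.last m) with ht
  have hcard : ∀ σ : Equiv.Perm (Fin (m+1)),
      Nat.card {x : Equiv.Perm (Fin (m+2)) //
        reduce (fw x) = (fun i => (σ i : ℕ) + 1) ∧
        reduce (lw x) = (fun i => (τ i : ℕ) + 1)} =
      ({c : Fin (m+2) | sigmaPat τ c = σ}).ncard := by
    intro σ
    rw [Nat.card_congr (edgeEquiv τ σ), ← Nat.card_coe_set_eq]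
    rfl
  have hab : (t.castSucc : Fin (m+2)) ≠ t.succ := (Fin.castSucc_lt_succ (i := t)).ne
  refine ⟨sigmaPat τ t.castSucc, ?_, ?_⟩
  · dsimp only
    rw [hcard]
    have hset : {c : Fin (m+2) | sigmaPat τ c = sigmaPat τ t.castSucc} =
        {t.castSucc, t.succ} := by
      ext c
      simp only [Set.mem_setOf_eq, Set.mem_insert_iff, Set.mem_singleton_iff]
      rw [sigmaPat_eq_iff' τ c t.castSucc, ← ht]
      unfold Prel
      constructor
      · rintro (h | ⟨h1, h2⟩ | ⟨h1, h2⟩)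
        · exact Or.inl h
        · simp at h2
        · right
          apply Fin.val_injective
          rw [Fin.val_succ]
          simp at h1
          omega
      · rintro (rfl | rfl)
        · exact Or.inl rfl
        · right; right
          constructor <;> simp
    rw [hset]
    exact Set.ncard_pair hab
  · intro σ hσ
    try dsimp only at hσ
    rw [hcard] at hσ
    obtain ⟨u, v, huv, hS⟩ := Set.ncard_eq_two.mp hσ
    have hu : sigmaPat τ u = σ := by
      have : u ∈ {c : Fin (m+2) | sigmaPat τ c = σ} := by rw [hS]; exact Set.mem_insert u {v}
      exact this
    have hv : sigmaPat τ v = σ := by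
      have : v ∈ {c : Fin (m+2) | sigmaPat τ c = σ} := by
        rw [hS]; exact Set.mem_insert_of_mem u rfl
      exact this
    have hP : Prel t u v := by
      rw [← sigmaPat_eq_iff' τ u v, hu, hv]
    rcases hP with h | ⟨h1, h2⟩ | ⟨h1, h2⟩
    · exact absurd h huv
    · rw [← hu]
      congr 1
      apply Fin.val_injective
      simpa using h1
    · rw [← hv]
      congr 1
      apply Fin.val_injective
      simpa using h1

end main3
end aux

/-- For each cluster `τ` there is a unique cluster `σ` joined to it by exactly two
parallel edges. -/
theorem unique_double_edge_in (n : ℕ) (hn : 3 ≤ n) (τ : Equiv.Perm (Fin (n - 1))) :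
    ∃! σ : Equiv.Perm (Fin (n - 1)),
      Nat.card {x : Equiv.Perm (Fin n) // isEdge x σ τ} = 2 := by
  obtain ⟨m, rfl⟩ : ∃ m, n = m + 2 := ⟨n - 2, by omega⟩
  exact main_clean τ
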